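/- Order optimality in pathwise form (Corollary 2): Let d ≥ 1, β ∈ (0,1], let k ≥ max(1,β) and m with 1 ≤ m ≤ k+1 be real numbers, let 𝔧 ≥ 1 be a real number, and let Γ₀ > 0. Define χ := max( m(k−β)/(k+2) + 1, (k+2−β)/2 ) and ζ := χ/(k+1−β). There exists Γ > 0, depending only on d, β, k, m, 𝔧, Γ₀, such that for every α ∈ [1/2, 1), every x ∈ ℝ^d with ‖x‖ ≥ (1−α)^{−ζ}, every sequence (x_t)_{t≥0} in ℝ^d with x₀ = x and ‖x_{t+1} − x_t‖ ≤ 𝔧 for all t, and every function H : ℝ^d → ℝ satisfying 0 ≤ H(y) ≤ Γ₀( (1+‖y‖)^{k−β} + (1−α)^{−m(k−β)/(k+2)} + (1−α)^{−(k−β)/2} ) for all y ∈ ℝ^d, one has Σ_{t=0}^∞ α^t H(x_t) ≤ Γ Σ_{t=0}^∞ α^t ‖x_t‖^{k−β}. -/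

import Mathlib

noncomputable section

lemma aux_summable_poly_geom (α r A J : ℝ) (hα0 : 0 < α) (hα1 : α < 1)
    (hr : 0 ≤ r) (hA : 0 ≤ A) (hJ : 0 ≤ J) :
    Summable (fun t : ℕ => α ^ t * (A + t * J) ^ r) := by
  set n : ℕ := ⌈r⌉₊ with hn
  have hAJ : 0 ≤ A + J := by linarith
  have hbase : Summable (fun t : ℕ => ((t : ℝ) + 1) ^ n * α ^ t) := by
    have h1 : Summable (fun t : ℕ => ((t : ℝ)) ^ n * α ^ t) :=
      summable_pow_mul_geometric_of_norm_lt_one n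
        (by rwa [Real.norm_eq_abs, abs_of_pos hα0])
    have h2 : Summable (fun t : ℕ => ((t : ℝ) + 1) ^ n * α ^ (t + 1)) := by
      have := (summable_nat_add_iff 1).2 h1
      simpa using this
    have h3 := h2.mul_left α⁻¹
    refine h3.congr fun t => ?_
    field_simp
    ring
  refine Summable.of_nonneg_of_le (fun t => ?_) (fun t => ?_)
    (hbase.mul_left ((A + J) ^ r))
  · positivity
  · have ht0 : (0:ℝ) ≤ t := Nat.cast_nonneg t
    have h1 : A + t * J ≤ (A + J) * ((t : ℝ) + 1) := by nlinarith
    have h2 : (A + t * J) ^ r ≤ ((A + J) * ((t:ℝ) + 1)) ^ r :=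
      Real.rpow_le_rpow (by positivity) h1 hr
    have h3 : ((A + J) * ((t:ℝ) + 1)) ^ r = (A + J) ^ r * ((t:ℝ) + 1) ^ r :=
      Real.mul_rpow hAJ (by positivity)
    have h4 : ((t:ℝ) + 1) ^ r ≤ ((t:ℝ) + 1) ^ (n : ℕ) := by
      rw [← Real.rpow_natCast ((t:ℝ) + 1) n]
      exact Real.rpow_le_rpow_of_exponent_le (by linarith) (Nat.le_ceil r)
    have h5 : (A + t * J) ^ r ≤ (A + J) ^ r * ((t:ℝ) + 1) ^ n := by
      calc (A + t * J) ^ r ≤ (A + J) ^ r * ((t:ℝ) + 1) ^ r := by rw [← h3]; exact h2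
        _ ≤ (A + J) ^ r * ((t:ℝ) + 1) ^ n :=
            mul_le_mul_of_nonneg_left h4 (Real.rpow_nonneg hAJ r)
    calc α ^ t * (A + t * J) ^ r ≤ α ^ t * ((A + J) ^ r * ((t:ℝ) + 1) ^ n) :=
          mul_le_mul_of_nonneg_left h5 (pow_nonneg hα0.le t)
      _ = (A + J) ^ r * (((t:ℝ) + 1) ^ n * α ^ t) := by ring

set_option maxHeartbeats 1000000 in
theorem order_optimality_pathwise
    (d : ℕ) (hd : 1 ≤ d) (β k m jmp Γ₀ : ℝ)
    (hβ0 : 0 < β) (hβ1 : β ≤ 1) (hk : max 1 β ≤ k)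
    (hm1 : 1 ≤ m) (hm2 : m ≤ k + 1)
    (hjmp : 1 ≤ jmp) (hΓ₀ : 0 < Γ₀)
    (χ ζ : ℝ)
    (hχ : χ = max (m * (k - β) / (k + 2) + 1) ((k + 2 - β) / 2))
    (hζ : ζ = χ / (k + 1 - β)) :
    ∃ Γ : ℝ, 0 < Γ ∧
      ∀ α : ℝ, 1 / 2 ≤ α → α < 1 →
      ∀ x : EuclideanSpace ℝ (Fin d), (1 - α) ^ (-ζ) ≤ ‖x‖ →
      ∀ xs : ℕ → EuclideanSpace ℝ (Fin d), xs 0 = x →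
      (∀ t : ℕ, ‖xs (t + 1) - xs t‖ ≤ jmp) →
      ∀ H : EuclideanSpace ℝ (Fin d) → ℝ,
      (∀ y, 0 ≤ H y ∧ H y ≤ Γ₀ * ((1 + ‖y‖) ^ (k - β) +
          (1 - α) ^ (-(m * (k - β) / (k + 2))) + (1 - α) ^ (-((k - β) / 2)))) →
      (∑' t : ℕ, α ^ t * H (xs t)) ≤ Γ * ∑' t : ℕ, α ^ t * ‖xs t‖ ^ (k - β) := by
  have hk1 : 1 ≤ k := le_trans (le_max_left 1 β) hk
  have hkβ : β ≤ k := le_trans (le_max_right 1 β) hk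
  set r := k - β with hrdef
  have hr0 : 0 ≤ r := by rw [hrdef]; linarith
  set a := m * r / (k + 2) with hadef
  clear_value r a
  have hk2 : (0:ℝ) < k + 2 := by linarith
  have ha0 : 0 ≤ a := by
    rw [hadef]
    have hm0 : 0 ≤ m := by linarith
    positivity
  have hχa : a + 1 ≤ χ := by rw [hχ]; exact le_max_left _ _
  have hχb : r / 2 + 1 ≤ χ := by
    rw [hχ]
    have h := le_max_right (a + 1) ((k + 2 - β) / 2)
    rw [hrdef]; linarith
  have hχ1 : 1 ≤ χ := by linarith
  have hrk : k + 1 - β = r + 1 := by rw [hrdef]; ring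
  have hr1 : (0:ℝ) < r + 1 := by linarith
  have hale : a ≤ r := by
    rw [hadef, div_le_iff₀ hk2]
    have h := mul_le_mul_of_nonneg_right (show m ≤ k + 2 by linarith) hr0
    linarith
  have hχle : χ ≤ r + 1 := by
    rw [hχ]
    apply max_le
    · linarith
    · rw [hrdef]; linarith
  have hζχ : ζ * (r + 1) = χ := by rw [hζ, hrk]; field_simp
  have hζ0 : 0 ≤ ζ := by
    rw [hζ, hrk]
    have : (0:ℝ) ≤ χ := by linarith
    positivity
  have hζ1 : ζ ≤ 1 := by rw [hζ, hrk, div_le_one hr1]; linarith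
  have hχζr : χ ≤ ζ * r + 1 := by linarith [hζχ, hζ1]
  have hjmp0 : (0:ℝ) < jmp := by linarith
  have h2r0 : (0:ℝ) < (2:ℝ) ^ r := Real.rpow_pos_of_pos two_pos r
  have h2r4 : (2:ℝ) ^ (r + 2) = (2:ℝ) ^ r * 4 := by
    rw [Real.rpow_add two_pos]; norm_num
  refine ⟨Γ₀ * ((2:ℝ) ^ r + ((2:ℝ) ^ r + 2) * ((2:ℝ) ^ (r + 2) * jmp)), by positivity, ?_⟩
  intro α hαhalf hα1 x hx xs hxs0 hjump H hH
  set ε := 1 - α with hεdef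
  clear_value ε
  have hε0 : 0 < ε := by rw [hεdef]; linarith
  have hεhalf : ε ≤ 1 / 2 := by rw [hεdef]; linarith
  have hε1 : ε ≤ 1 := by linarith
  have hα0 : 0 < α := by linarith
  have hx1 : (1:ℝ) ≤ ‖x‖ := by
    refine le_trans ?_ hx
    have := Real.rpow_le_rpow_of_exponent_ge hε0 hε1 (neg_nonpos.2 hζ0)
    rwa [Real.rpow_zero] at this
  have hx0 : (0:ℝ) < ‖x‖ := by linarith
  -- trajectory norm bounds
  have hlb : ∀ t : ℕ, ‖x‖ - t * jmp ≤ ‖xs t‖ := by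
    intro t
    induction t with
    | zero => simp [hxs0]
    | succ n ih =>
      have h1 := hjump n
      have h2 : ‖xs n‖ - ‖xs (n + 1)‖ ≤ jmp := by
        have := norm_sub_norm_le (xs n) (xs (n + 1))
        rw [norm_sub_rev] at this
        linarith
      push_cast
      linarith
  have hub : ∀ t : ℕ, ‖xs t‖ ≤ ‖x‖ + t * jmp := by
    intro t
    induction t with
    | zero => simp [hxs0]
    | succ n ih =>
      have h1 := hjump n
      have h2 : ‖xs (n + 1)‖ - ‖xs n‖ ≤ jmp := by
        have := norm_sub_norm_le (xs (n + 1)) (xs n)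
        linarith
      push_cast
      linarith
  have hsumS : Summable (fun t : ℕ => α ^ t * ‖xs t‖ ^ r) := by
    refine Summable.of_nonneg_of_le (fun t => by positivity) (fun t => ?_)
      (aux_summable_poly_geom α r ‖x‖ jmp hα0 hα1 hr0 (norm_nonneg x) hjmp0.le)
    exact mul_le_mul_of_nonneg_left
      (Real.rpow_le_rpow (norm_nonneg _) (hub t) hr0) (pow_nonneg hα0.le t)
  set S := ∑' t : ℕ, α ^ t * ‖xs t‖ ^ r with hSdef
  clear_value S
  have hS0 : 0 ≤ S := by rw [hSdef]; exact tsum_nonneg fun t => by positivity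
  -- key lower bound on S
  have hkey : ε ^ (-χ) ≤ (2:ℝ) ^ (r + 2) * jmp * S := by
    set T : ℕ := ⌊‖x‖ / (2 * jmp)⌋₊ with hTdef
    have hT1 : (T:ℝ) ≤ ‖x‖ / (2 * jmp) := Nat.floor_le (by positivity)
    have hT2 : ‖x‖ / (2 * jmp) ≤ (T:ℝ) + 1 := (Nat.lt_floor_add_one _).le
    clear_value T
    have hhalf : ∀ t : ℕ, t ≤ T → ‖x‖ / 2 ≤ ‖xs t‖ := by
      intro t ht
      have htT : (t:ℝ) ≤ T := Nat.cast_le.2 ht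
      have h3 : (t:ℝ) * jmp ≤ ‖x‖ / 2 := by
        calc (t:ℝ) * jmp ≤ (T:ℝ) * jmp := mul_le_mul_of_nonneg_right htT hjmp0.le
          _ ≤ (‖x‖ / (2 * jmp)) * jmp := mul_le_mul_of_nonneg_right hT1 hjmp0.le
          _ = ‖x‖ / 2 := by field_simp
      linarith [hlb t]
    have hpartial : (‖x‖ / 2) ^ r * (∑ t ∈ Finset.range (T + 1), α ^ t) ≤ S := by
      rw [Finset.mul_sum]
      calc ∑ t ∈ Finset.range (T + 1), (‖x‖ / 2) ^ r * α ^ t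
          ≤ ∑ t ∈ Finset.range (T + 1), α ^ t * ‖xs t‖ ^ r := by
            refine Finset.sum_le_sum fun t ht => ?_
            have h1 : (‖x‖ / 2) ^ r ≤ ‖xs t‖ ^ r :=
              Real.rpow_le_rpow (by positivity)
                (hhalf t (Nat.lt_succ_iff.1 (Finset.mem_range.1 ht))) hr0
            calc (‖x‖ / 2) ^ r * α ^ t ≤ ‖xs t‖ ^ r * α ^ t :=
                  mul_le_mul_of_nonneg_right h1 (pow_nonneg hα0.le t)
              _ = α ^ t * ‖xs t‖ ^ r := by ring
        _ ≤ S := by rw [hSdef]; exact Summable.sum_le_tsum _ (fun t _ => by positivity) hsumS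
    have hx2r : (‖x‖ / 2) ^ r = ‖x‖ ^ r / (2:ℝ) ^ r :=
      Real.div_rpow (norm_nonneg x) (by norm_num : (0:ℝ) ≤ 2) r
    have hxr : ε ^ (-(ζ * r)) ≤ ‖x‖ ^ r := by
      have h := Real.rpow_le_rpow (Real.rpow_nonneg hε0.le _) hx hr0
      rw [← Real.rpow_mul hε0.le] at h
      rwa [show -ζ * r = -(ζ * r) by ring] at h
    by_cases hcase : 1 ≤ ((T:ℝ) + 1) * ε
    · -- case A : long enough horizon
      have hne : α ≠ 1 := ne_of_lt hα1
      have hgs : ∑ t ∈ Finset.range (T + 1), α ^ t = (1 - α ^ (T + 1)) / ε := by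
        rw [geom_sum_eq hne, hεdef,
          div_eq_div_iff (sub_ne_zero.2 hne) (by intro hc; rw [sub_eq_zero] at hc; exact hne hc.symm)]
        ring
      have hbern : (2:ℝ) ≤ α⁻¹ ^ (T + 1) := by
        have hd0 : (0:ℝ) ≤ ε / α := div_nonneg hε0.le hα0.le
        have h := one_add_mul_le_pow (show (-2:ℝ) ≤ ε / α by linarith) (T + 1)
        have h1α : (1:ℝ) + ε / α = α⁻¹ := by
          rw [hεdef]; field_simp; ring
        have hεα : ε ≤ ε / α := by
          rw [le_div_iff₀ hα0]
          have := mul_le_mul_of_nonneg_left hα1.le hε0.le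
          linarith
        have h2 : ((T:ℝ) + 1) * ε ≤ ((T:ℝ) + 1) * (ε / α) :=
          mul_le_mul_of_nonneg_left hεα (by positivity)
        rw [h1α] at h
        push_cast at h
        linarith
      have hαT : α ^ (T + 1) ≤ 1 / 2 := by
        have hp : (0:ℝ) < α ^ (T + 1) := pow_pos hα0 _
        have h2 : 2 * α ^ (T + 1) ≤ α⁻¹ ^ (T + 1) * α ^ (T + 1) :=
          mul_le_mul_of_nonneg_right hbern hp.le
        rw [← mul_pow, inv_mul_cancel₀ hα0.ne', one_pow] at h2
        linarith
      have hsum_lb : 1 / (2 * ε) ≤ ∑ t ∈ Finset.range (T + 1), α ^ t := by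
        rw [hgs, div_le_div_iff₀ (by linarith) hε0]
        have h12 : (1:ℝ) / 2 ≤ 1 - α ^ (T + 1) := by linarith
        have := mul_le_mul_of_nonneg_right h12 (show (0:ℝ) ≤ 2 * ε by linarith)
        linarith
      have hSlb : (‖x‖ ^ r / (2:ℝ) ^ r) * (1 / (2 * ε)) ≤ S := by
        rw [← hx2r]
        exact le_trans (mul_le_mul_of_nonneg_left hsum_lb (by positivity)) hpartial
      calc ε ^ (-χ) ≤ ε ^ (-(ζ * r + 1)) :=
            Real.rpow_le_rpow_of_exponent_ge hε0 hε1 (by linarith)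
        _ = ε ^ (-(ζ * r)) * ε⁻¹ := by
            rw [show -(ζ * r + 1) = -(ζ * r) + (-1) by ring, Real.rpow_add hε0,
              Real.rpow_neg_one]
        _ ≤ ‖x‖ ^ r * ε⁻¹ := mul_le_mul_of_nonneg_right hxr (inv_nonneg.2 hε0.le)
        _ = ((2:ℝ) ^ r * 2) * ((‖x‖ ^ r / (2:ℝ) ^ r) * (1 / (2 * ε))) := by
            field_simp
        _ ≤ ((2:ℝ) ^ r * 2) * S := mul_le_mul_of_nonneg_left hSlb (by positivity)
        _ ≤ (2:ℝ) ^ (r + 2) * jmp * S := by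
            rw [h2r4]
            have h5 : (2:ℝ) ^ r * 4 * 1 ≤ (2:ℝ) ^ r * 4 * jmp :=
              mul_le_mul_of_nonneg_left hjmp (by positivity)
            have h6 : (2:ℝ) ^ r * 2 ≤ (2:ℝ) ^ r * 4 * jmp := by linarith
            exact mul_le_mul_of_nonneg_right h6 hS0
    · -- case B : short horizon
      push_neg at hcase
      have hbern : ∀ t : ℕ, 1 - (t:ℝ) * ε ≤ α ^ t := by
        intro t
        have h := one_add_mul_le_pow (show (-2:ℝ) ≤ -ε by linarith) t
        have h1 : (1:ℝ) + -ε = α := by rw [hεdef]; ring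
        rw [h1] at h
        push_cast at h
        linarith
      have hgauss : (∑ t ∈ Finset.range (T + 1), (t:ℝ)) = T * (T + 1) / 2 := by
        have h := Finset.sum_range_id_mul_two (T + 1)
        have h2 : ((∑ i ∈ Finset.range (T + 1), i : ℕ) : ℝ) * 2 = (T + 1) * T := by
          exact_mod_cast congrArg (Nat.cast (R := ℝ)) h
        push_cast at h2
        push_cast
        linarith
      have hsum_lb : ((T:ℝ) + 1) / 2 ≤ ∑ t ∈ Finset.range (T + 1), α ^ t := by
        have h1 : ∑ t ∈ Finset.range (T + 1), (1 - (t:ℝ) * ε)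
            ≤ ∑ t ∈ Finset.range (T + 1), α ^ t :=
          Finset.sum_le_sum fun t _ => hbern t
        have h2 : ∑ t ∈ Finset.range (T + 1), (1 - (t:ℝ) * ε)
            = ((T:ℝ) + 1) - ε * (T * (T + 1) / 2) := by
          rw [Finset.sum_sub_distrib, Finset.sum_const, Finset.card_range]
          rw [show (∑ t ∈ Finset.range (T + 1), (t:ℝ) * ε)
              = (∑ t ∈ Finset.range (T + 1), (t:ℝ)) * ε from (Finset.sum_mul _ _ _).symm]
          rw [hgauss]
          push_cast
          ring
        have hT0 : (0:ℝ) ≤ T := Nat.cast_nonneg T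
        have h3 : ε * ((T:ℝ) * (T + 1) / 2) ≤ ((T:ℝ) + 1) / 2 := by
          have h4 : ε * (T:ℝ) ≤ 1 := by linarith [hcase, hε0]
          have h5 := mul_le_mul_of_nonneg_right h4 (show (0:ℝ) ≤ (T:ℝ) + 1 by linarith)
          linarith
        linarith
      have hSlb : (‖x‖ ^ r / (2:ℝ) ^ r) * (((T:ℝ) + 1) / 2) ≤ S := by
        rw [← hx2r]
        exact le_trans (mul_le_mul_of_nonneg_left hsum_lb (by positivity)) hpartial
      have hxr1 : ε ^ (-χ) ≤ ‖x‖ ^ (r + 1) := by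
        have h := Real.rpow_le_rpow (Real.rpow_nonneg hε0.le _) hx (by linarith : (0:ℝ) ≤ r + 1)
        rw [← Real.rpow_mul hε0.le] at h
        rwa [show -ζ * (r + 1) = -χ by rw [← hζχ]; ring] at h
      calc ε ^ (-χ) ≤ ‖x‖ ^ (r + 1) := hxr1
        _ = ‖x‖ ^ r * ‖x‖ := by
            rw [Real.rpow_add hx0, Real.rpow_one]
        _ ≤ ‖x‖ ^ r * (2 * jmp * ((T:ℝ) + 1)) := by
            apply mul_le_mul_of_nonneg_left _ (Real.rpow_nonneg (norm_nonneg x) r)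
            rw [div_le_iff₀ (by positivity)] at hT2
            linarith [hT2]
        _ = ((2:ℝ) ^ (r + 2) * jmp) * ((‖x‖ ^ r / (2:ℝ) ^ r) * (((T:ℝ) + 1) / 2)) := by
            rw [h2r4]
            field_simp
            ring
        _ ≤ ((2:ℝ) ^ (r + 2) * jmp) * S :=
            mul_le_mul_of_nonneg_left hSlb (by positivity)
        _ = (2:ℝ) ^ (r + 2) * jmp * S := by ring
  -- upper bound on the H-sum
  -- upper bound on the H-sum
  have hgeo : Summable (fun t : ℕ => α ^ t) := summable_geometric_of_lt_one hα0.le hα1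
  have h2s : ∀ s : ℝ, 0 ≤ s → (1 + s) ^ r ≤ (2:ℝ) ^ r * (1 + s ^ r) := by
    intro s hs
    rcases le_total s 1 with h | h
    · have h1 : (1 + s) ^ r ≤ (2:ℝ) ^ r := Real.rpow_le_rpow (by linarith) (by linarith) hr0
      have h2 : (0:ℝ) ≤ s ^ r := Real.rpow_nonneg hs r
      have h3 := mul_le_mul_of_nonneg_left (show (1:ℝ) ≤ 1 + s ^ r by linarith) h2r0.le
      linarith
    · have h1 : (1 + s) ^ r ≤ (2 * s) ^ r := Real.rpow_le_rpow (by linarith) (by linarith) hr0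
      have h2 : (2 * s) ^ r = (2:ℝ) ^ r * s ^ r := Real.mul_rpow (by norm_num) hs
      have h3 := mul_le_mul_of_nonneg_left (show s ^ r ≤ 1 + s ^ r by linarith) h2r0.le
      linarith
  have hHle : ∀ t : ℕ, α ^ t * H (xs t) ≤ Γ₀ * (2:ℝ) ^ r * (α ^ t * ‖xs t‖ ^ r)
      + (Γ₀ * ((2:ℝ) ^ r + ε ^ (-a) + ε ^ (-(r / 2)))) * α ^ t := by
    intro t
    have h1 := (hH (xs t)).2
    have h2 := h2s ‖xs t‖ (norm_nonneg _)
    have h4 := mul_le_mul_of_nonneg_left h2 hΓ₀.le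
    have h3 : H (xs t) ≤ Γ₀ * (2:ℝ) ^ r * ‖xs t‖ ^ r
        + Γ₀ * ((2:ℝ) ^ r + ε ^ (-a) + ε ^ (-(r / 2))) := by linarith
    calc α ^ t * H (xs t)
        ≤ α ^ t * (Γ₀ * (2:ℝ) ^ r * ‖xs t‖ ^ r
            + Γ₀ * ((2:ℝ) ^ r + ε ^ (-a) + ε ^ (-(r / 2)))) :=
          mul_le_mul_of_nonneg_left h3 (pow_nonneg hα0.le t)
      _ = Γ₀ * (2:ℝ) ^ r * (α ^ t * ‖xs t‖ ^ r)
            + (Γ₀ * ((2:ℝ) ^ r + ε ^ (-a) + ε ^ (-(r / 2)))) * α ^ t := by ring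
  have hsumRHS : Summable (fun t : ℕ => Γ₀ * (2:ℝ) ^ r * (α ^ t * ‖xs t‖ ^ r)
      + (Γ₀ * ((2:ℝ) ^ r + ε ^ (-a) + ε ^ (-(r / 2)))) * α ^ t) :=
    (hsumS.mul_left _).add (hgeo.mul_left _)
  have hsumH : Summable (fun t : ℕ => α ^ t * H (xs t)) :=
    Summable.of_nonneg_of_le (fun t => mul_nonneg (pow_nonneg hα0.le t) (hH (xs t)).1)
      hHle hsumRHS
  have htsum : (∑' t : ℕ, α ^ t * H (xs t))
      ≤ Γ₀ * (2:ℝ) ^ r * S + (Γ₀ * ((2:ℝ) ^ r + ε ^ (-a) + ε ^ (-(r / 2)))) * ε⁻¹ := by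
    have h1 := Summable.tsum_le_tsum hHle hsumH hsumRHS
    rw [Summable.tsum_add (hsumS.mul_left _) (hgeo.mul_left _), tsum_mul_left, tsum_mul_left,
      tsum_geometric_of_lt_one hα0.le hα1, ← hεdef, ← hSdef] at h1
    exact h1
  have hε1' : ε⁻¹ ≤ ε ^ (-χ) := by
    rw [← Real.rpow_neg_one ε]
    exact Real.rpow_le_rpow_of_exponent_ge hε0 hε1 (by linarith)
  have hεa : ε ^ (-a) * ε⁻¹ ≤ ε ^ (-χ) := by
    rw [← Real.rpow_neg_one ε, ← Real.rpow_add hε0]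
    exact Real.rpow_le_rpow_of_exponent_ge hε0 hε1 (by linarith)
  have hεb : ε ^ (-(r / 2)) * ε⁻¹ ≤ ε ^ (-χ) := by
    rw [← Real.rpow_neg_one ε, ← Real.rpow_add hε0]
    exact Real.rpow_le_rpow_of_exponent_ge hε0 hε1 (by linarith)
  have hc2ε : (Γ₀ * ((2:ℝ) ^ r + ε ^ (-a) + ε ^ (-(r / 2)))) * ε⁻¹
      ≤ Γ₀ * ((2:ℝ) ^ r + 2) * ε ^ (-χ) := by
    have e0 : (2:ℝ) ^ r * ε⁻¹ ≤ (2:ℝ) ^ r * ε ^ (-χ) :=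
      mul_le_mul_of_nonneg_left hε1' h2r0.le
    have e1 : (2:ℝ) ^ r * ε⁻¹ + ε ^ (-a) * ε⁻¹ + ε ^ (-(r / 2)) * ε⁻¹
        ≤ ((2:ℝ) ^ r + 2) * ε ^ (-χ) := by linarith
    calc (Γ₀ * ((2:ℝ) ^ r + ε ^ (-a) + ε ^ (-(r / 2)))) * ε⁻¹
        = Γ₀ * ((2:ℝ) ^ r * ε⁻¹ + ε ^ (-a) * ε⁻¹ + ε ^ (-(r / 2)) * ε⁻¹) := by ring
      _ ≤ Γ₀ * (((2:ℝ) ^ r + 2) * ε ^ (-χ)) := mul_le_mul_of_nonneg_left e1 hΓ₀.le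
      _ = Γ₀ * ((2:ℝ) ^ r + 2) * ε ^ (-χ) := by ring
  have hfin : Γ₀ * ((2:ℝ) ^ r + 2) * ε ^ (-χ)
      ≤ Γ₀ * ((2:ℝ) ^ r + 2) * ((2:ℝ) ^ (r + 2) * jmp * S) :=
    mul_le_mul_of_nonneg_left hkey (mul_nonneg hΓ₀.le (by positivity))
  calc (∑' t : ℕ, α ^ t * H (xs t))
      ≤ Γ₀ * (2:ℝ) ^ r * S + (Γ₀ * ((2:ℝ) ^ r + ε ^ (-a) + ε ^ (-(r / 2)))) * ε⁻¹ := htsum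
    _ ≤ Γ₀ * (2:ℝ) ^ r * S + Γ₀ * ((2:ℝ) ^ r + 2) * ((2:ℝ) ^ (r + 2) * jmp * S) := by
        linarith
    _ = Γ₀ * ((2:ℝ) ^ r + ((2:ℝ) ^ r + 2) * ((2:ℝ) ^ (r + 2) * jmp)) * S := by ring
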